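/- Let Q be a real polynomial of degree d ≥ 1 which is hyperbolic (all its roots are real, i.e., Q has d real roots counted with multiplicity) and satisfies Q(0) ≠ 0, and let b_j denote the coefficient of X^j in Q. Then the number of positive roots of Q, counted with multiplicity, equals the number of sign changes in the sequence of coefficients of Q after erasing the zero coefficients, i.e., it equals the number of pairs (i, j) with 0 ≤ i < j ≤ d such that b_i · b_j < 0 and b_k = 0 for all k with i < k < j. -/

import Mathlib

open Polynomial List
namespace DescAux

noncomputable def nzf (l : List ℝ) : List ℝ := l.filter (fun x => x ≠ 0)

@[simp] lemma nzf_nil : nzf [] = [] := rfl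
lemma nzf_cons_zero (t : List ℝ) : nzf ((0:ℝ) :: t) = nzf t := by
  simp [nzf]
lemma nzf_cons_ne {a : ℝ} (ha : a ≠ 0) (t : List ℝ) : nzf (a :: t) = a :: nzf t := by
  simp [nzf, ha]
lemma nzf_append (s t : List ℝ) : nzf (s ++ t) = nzf s ++ nzf t := by
  simp [nzf]
lemma nzf_replicate (k : ℕ) : nzf (List.replicate k (0:ℝ)) = [] := by
  simp [nzf]
lemma nzf_mem {l : List ℝ} {x : ℝ} (h : x ∈ nzf l) : x ≠ 0 := by
  simp [nzf] at h; exact h.2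
lemma nzf_sublist (l : List ℝ) : nzf l <+ l := List.filter_sublist
lemma nzf_mem_iff {l : List ℝ} {x : ℝ} : x ∈ nzf l ↔ x ∈ l ∧ x ≠ 0 := by
  simp [nzf]

/-- alternate signs starting with sign σ -/
noncomputable def alt : ℝ → List ℝ → List ℝ
  | _, [] => []
  | σ, a :: t => σ * a :: alt (-σ) t

@[simp] lemma alt_nil (σ : ℝ) : alt σ [] = [] := rfl
lemma alt_cons (σ a : ℝ) (t : List ℝ) : alt σ (a :: t) = σ * a :: alt (-σ) t := rfl

lemma alt_neg (σ : ℝ) (l : List ℝ) : alt (-σ) l = List.map (fun x => -x) (alt σ l) := by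
  induction l generalizing σ with
  | nil => rfl
  | cons a t ih =>
    rw [alt_cons, alt_cons, List.map_cons, ← ih (-σ), neg_neg]
    ring_nf

lemma nzf_map_neg (l : List ℝ) : nzf (List.map (fun x => -x) l) = List.map (fun x => -x) (nzf l) := by
  induction l with
  | nil => rfl
  | cons a t ih =>
    by_cases ha : a = 0
    · subst ha
      simp only [List.map_cons, neg_zero, nzf_cons_zero]
      exact ih
    · rw [List.map_cons, nzf_cons_ne (by simpa using ha), nzf_cons_ne ha, List.map_cons, ih]

noncomputable def sv : List ℝ → ℕ
  | [] => 0
  | [_] => 0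
  | a :: b :: t => (if a * b < 0 then 1 else 0) + sv (b :: t)

lemma sv_cons_cons (a b : ℝ) (t : List ℝ) :
    sv (a :: b :: t) = (if a * b < 0 then 1 else 0) + sv (b :: t) := by
  simp [sv]

lemma sv_map_neg (l : List ℝ) : sv (List.map (fun x => -x) l) = sv l := by
  induction l with
  | nil => rfl
  | cons a t ih =>
    cases t with
    | nil => rfl
    | cons b s =>
      simp only [List.map_cons]
      rw [sv_cons_cons, sv_cons_cons, show (-a) * (-b) = a * b by ring]
      have ih' : sv (-b :: List.map (fun x => -x) s) = sv (b :: s) := by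
        simpa using ih
      rw [ih']

lemma sv_nzf_alt_neg (σ : ℝ) (l : List ℝ) :
    sv (nzf (alt (-σ) l)) = sv (nzf (alt σ l)) := by
  rw [alt_neg, nzf_map_neg, sv_map_neg]

lemma alt_replicate_append (σ : ℝ) (k : ℕ) (m : List ℝ) :
    alt σ (List.replicate k 0 ++ m) = List.replicate k 0 ++ alt (σ * (-1)^k) m := by
  induction k generalizing σ with
  | zero => simp
  | succ n ih =>
    rw [List.replicate_succ, List.cons_append, alt_cons, ih (-σ), mul_zero,
      List.cons_append, show σ * (-1)^(n+1) = -σ * (-1)^n by ring]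

/-- decomposition: first nonzero entry -/
lemma first_nz (t : List ℝ) (h : ∃ x ∈ t, x ≠ 0) :
    ∃ k b t', b ≠ 0 ∧ t = List.replicate k 0 ++ b :: t' := by
  induction t with
  | nil => simp at h
  | cons a s ih =>
    by_cases ha : a = 0
    · subst ha
      have : ∃ x ∈ s, x ≠ 0 := by
        rcases h with ⟨x, hx, hxn⟩
        simp at hx
        rcases hx with h'|h'
        · exact absurd h' hxn
        · exact ⟨x, h', hxn⟩
      rcases ih this with ⟨k, b, t', hb, ht⟩
      exact ⟨k+1, b, t', hb, by rw [ht, List.replicate_succ, List.cons_append]⟩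
    · exact ⟨0, a, s, ha, by simp⟩

/-- decomposition relative to a sign -/
lemma sign_decomp (a : ℝ) (t : List ℝ) :
    (∀ z ∈ t, 0 ≤ a * z) ∨
    ∃ u b w, (∀ z ∈ u, 0 ≤ a * z) ∧ a * b < 0 ∧ t = u ++ b :: w := by
  induction t with
  | nil => left; simp
  | cons x s ih =>
    by_cases hx : a * x < 0
    · right; exact ⟨[], x, s, by simp, hx, by simp⟩
    · rcases ih with h | ⟨u, b, w, hu, hb, hw⟩
      · left
        intro z hz
        simp at hz
        rcases hz with h'|h'
        · subst h'; linarith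
        · exact h z h'
      · right
        exact ⟨x :: u, b, w, by
          intro z hz; simp at hz
          rcases hz with h'|h'
          · subst h'; linarith
          · exact hu z h', hb, by rw [hw, List.cons_append]⟩





@[simp] lemma sv_nil : sv [] = 0 := rfl
@[simp] lemma sv_single (a : ℝ) : sv [a] = 0 := rfl

lemma sv_le_cons (a : ℝ) (t : List ℝ) : sv t ≤ sv (a :: t) := by
  cases t with
  | nil => simp
  | cons b s => rw [sv_cons_cons]; omega

lemma sgn_iff {x y : ℝ} (h : 0 < x * y) (z : ℝ) : x * z < 0 ↔ y * z < 0 := by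
  rcases mul_pos_iff.1 h with ⟨hx, hy⟩ | ⟨hx, hy⟩
  · constructor <;> intro hz
    · nlinarith
    · nlinarith
  · constructor <;> intro hz
    · nlinarith
    · nlinarith

lemma sgn_trans {x y z : ℝ} (h : 0 < x * y) (h2 : y * z < 0) : x * z < 0 :=
  (sgn_iff (show (0:ℝ) < y * x by rw [mul_comm]; exact h) z).1 h2

lemma sv_append (s m : List ℝ) (hs : s ≠ []) (hm : m ≠ []) :
    sv (s ++ m) = sv s + (if s.getLast hs * m.head hm < 0 then 1 else 0) + sv m := by
  induction s with
  | nil => simp at hs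
  | cons a s ih =>
    cases s with
    | nil =>
      cases m with
      | nil => simp at hm
      | cons b mm =>
        simp [sv_cons_cons, List.getLast]
        exact if_congr Iff.rfl rfl rfl
    | cons b s2 =>
      have h1 : (b :: s2) ≠ [] := by simp
      have ih' := ih h1
      have hg : (a :: b :: s2).getLast hs = (b :: s2).getLast h1 := by
        simp [List.getLast]
      rw [show (a :: b :: s2) ++ m = a :: b :: (s2 ++ m) from rfl,
        sv_cons_cons a b (s2 ++ m),
        show b :: (s2 ++ m) = (b :: s2) ++ m from rfl, ih', sv_cons_cons, hg]
      ring

lemma sv_ge_one (l : List ℝ) (h : l ≠ []) (hnz : ∀ x ∈ l, x ≠ 0)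
    (hop : l.head h * l.getLast h < 0) : 1 ≤ sv l := by
  induction l with
  | nil => simp at h
  | cons a t ih =>
    cases t with
    | nil => simp at hop; nlinarith [mul_self_nonneg a]
    | cons b s =>
      rw [sv_cons_cons]
      by_cases hab : a * b < 0
      · simp [hab]
      · have hne : (b :: s) ≠ [] := by simp
        have ha : a ≠ 0 := hnz a (by simp)
        have hb : b ≠ 0 := hnz b (by simp)
        have habp : 0 < a * b := by
          rcases (not_lt.1 hab).eq_or_lt with h' | h'
          · exact absurd (mul_eq_zero.1 h'.symm) (by simp [ha, hb])
          · exact h'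
        have hl : (a :: b :: s).getLast h = (b :: s).getLast hne := by
          simp [List.getLast]
        have hop2 : (b :: s).head hne * (b :: s).getLast hne < 0 := by
          have hx : a * ((b :: s).getLast hne) < 0 := by rw [← hl]; exact hop
          exact sgn_trans (show (0:ℝ) < b * a by rw [mul_comm]; exact habp) hx
        have := ih hne (fun x hx => hnz x (by simp at hx; rcases hx with h|h <;> simp [h]))
          hop2
        omega

lemma sv_zero_of_samesign (a : ℝ) (l : List ℝ) (h : ∀ x ∈ l, 0 < a * x) : sv l = 0 := by
  induction l with
  | nil => rfl
  | cons x t ih =>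
    cases t with
    | nil => rfl
    | cons y s =>
      rw [sv_cons_cons]
      have hx := h x (by simp)
      have hy := h y (by simp)
      have hxy : ¬ (x * y < 0) := by nlinarith [mul_pos hx hy, mul_self_nonneg a]
      simp only [hxy, if_false, Nat.zero_add]
      exact ih (fun z hz => h z (by simp at hz; rcases hz with h'|h' <;> simp [h']))

lemma sv_head_replace {x y : ℝ} (h : 0 < x * y) (m : List ℝ) :
    sv (x :: m) = sv (y :: m) := by
  cases m with
  | nil => rfl
  | cons b s => rw [sv_cons_cons, sv_cons_cons, if_congr (sgn_iff h b) rfl rfl]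


/-- coefficients of (X) * P - r * P given P's coeffs `prev :: t` style helper -/
noncomputable def g (r : ℝ) : ℝ → List ℝ → List ℝ
  | prev, [] => [prev]
  | prev, a :: t => (prev - r * a) :: g r a t

noncomputable def f (r : ℝ) : List ℝ → List ℝ
  | [] => []
  | a :: t => (-(r * a)) :: g r a t

lemma g_nil (r prev : ℝ) : g r prev [] = [prev] := rfl
lemma f_nil (r : ℝ) : f r [] = [] := rfl
lemma g_cons (r prev a : ℝ) (t : List ℝ) :
    g r prev (a :: t) = (prev - r * a) :: g r a t := rfl
lemma f_cons (r a : ℝ) (t : List ℝ) : f r (a :: t) = (-(r * a)) :: g r a t := rfl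

lemma sgn_pos_trans {a x y : ℝ} (h1 : 0 < a * x) (h2 : 0 < a * y) : 0 < x * y := by
  nlinarith [mul_pos h1 h2, mul_self_nonneg a]

/-- splitting g along a decomposition of the input list -/
lemma g_split (r b : ℝ) (w : List ℝ) : ∀ (u : List ℝ) (prev : ℝ),
    ∃ H pl, g r prev (u ++ b :: w) = H ++ ((pl - r * b) :: g r b w) ∧
      (pl = prev ∨ pl ∈ u) := by
  intro u
  induction u with
  | nil => exact fun prev => ⟨[], prev, by simp [g_cons], Or.inl rfl⟩
  | cons x u' ih =>
    intro prev
    rcases ih x with ⟨H, pl, hEq, hpl⟩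
    refine ⟨(prev - r * x) :: H, pl, ?_, ?_⟩
    · rw [List.cons_append, g_cons, hEq]; rfl
    · rcases hpl with h | h
      · exact Or.inr (by simp [h])
      · exact Or.inr (by simp [h])

lemma g_zeros (r : ℝ) (k : ℕ) : g r 0 (List.replicate k 0) = List.replicate (k+1) 0 := by
  induction k with
  | zero => simp [g_nil]
  | succ n ih =>
    rw [List.replicate_succ, g_cons, ih]
    simp [List.replicate_succ]

/-- last nonzero entry of `g r prev u` has the sign of `a`,
given everything is `a`-compatible and something is nonzero -/
lemma g_last (r a : ℝ) (ha : a ≠ 0) : ∀ (u : List ℝ) (prev : ℝ),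
    0 ≤ a * prev → (∀ z ∈ u, 0 ≤ a * z) → (prev ≠ 0 ∨ ∃ z ∈ u, z ≠ 0) →
    ∃ (h : nzf (g r prev u) ≠ []), 0 < a * (nzf (g r prev u)).getLast h := by
  intro u
  induction u with
  | nil =>
    intro prev hp hu hd
    have hprev : prev ≠ 0 := by
      rcases hd with h | ⟨z, hz, _⟩
      · exact h
      · simp at hz
    rw [g_nil, nzf_cons_ne hprev, nzf_nil]
    refine ⟨by simp, ?_⟩
    simp only [List.getLast_singleton]
    exact lt_of_le_of_ne hp (by
      intro h
      exact (mul_ne_zero ha hprev) h.symm)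
  | cons x u' ih =>
    intro prev hp hu hd
    rw [g_cons]
    by_cases hcase : x ≠ 0 ∨ ∃ z ∈ u', z ≠ 0
    · rcases ih x (hu x (by simp)) (fun z hz => hu z (by simp [hz])) hcase with ⟨h1, h2⟩
      have key : ∀ (y : ℝ), ∃ (h : nzf (y :: g r x u') ≠ []),
          0 < a * (nzf (y :: g r x u')).getLast h := by
        intro y
        by_cases hy : y = 0
        · subst hy; rw [nzf_cons_zero]; exact ⟨h1, h2⟩
        · rw [nzf_cons_ne hy]
          refine ⟨by simp, ?_⟩
          rw [List.getLast_cons h1]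
          exact h2
      exact key _
    · push_neg at hcase
      obtain ⟨hx0, hall⟩ := hcase
      subst hx0
      have hprev : prev ≠ 0 := by
        rcases hd with h | ⟨z, hz, hzn⟩
        · exact h
        · simp at hz
          rcases hz with h | h
          · exact absurd h hzn
          · exact absurd (hall z h) hzn
      have hu' : u' = List.replicate u'.length 0 :=
        List.eq_replicate_of_mem (fun {x} hx => hall x hx)
      rw [mul_zero, sub_zero, hu', g_zeros, nzf_cons_ne hprev, nzf_replicate]
      refine ⟨by simp, ?_⟩
      simp only [List.getLast_singleton]
      exact lt_of_le_of_ne hp (by intro h; exact (mul_ne_zero ha hprev) h.symm)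

/-- THE key lemma: multiplying by (X - r), r > 0, increases sign variation -/
lemma key_A : ∀ (n : ℕ) (t : List ℝ), t.length ≤ n → ∀ (a r : ℝ), 0 < r → a ≠ 0 →
    sv (nzf (a :: t)) + 1 ≤ sv (nzf (f r (a :: t))) := by
  intro n
  induction n with
  | zero =>
    intro t ht a r hr ha
    -- t = []
    have ht0 : t = [] := List.length_eq_zero_iff.1 (Nat.le_zero.1 ht)
    subst ht0
    rw [f_cons, g_nil, nzf_cons_ne ha, nzf_nil, sv_single]
    have hra : -(r * a) ≠ 0 := by
      intro h
      apply ha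
      have := neg_eq_zero.1 h
      rcases mul_eq_zero.1 this with h' | h'
      · linarith
      · exact h'
    rw [nzf_cons_ne hra, nzf_cons_ne ha, nzf_nil, sv_cons_cons]
    have hq : -(r * a) * a < 0 := by nlinarith [mul_self_pos.2 ha]
    simp only [hq, if_pos]
    omega
  | succ n ih =>
    intro t ht a r hr ha
    have hra : -(r * a) ≠ 0 := by
      intro h
      rcases mul_eq_zero.1 (neg_eq_zero.1 h) with h' | h'
      · linarith
      · exact ha h'
    rcases sign_decomp a t with hcompat | ⟨u, b, w, hu, hb, htw⟩
    · -- no sign change in the input: LHS = 0, RHS ≥ 1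
      have hL : sv (nzf (a :: t)) = 0 := by
        apply sv_zero_of_samesign a
        intro x hx
        rw [nzf_mem_iff] at hx
        obtain ⟨hx1, hx2⟩ := hx
        rcases List.mem_cons.1 hx1 with h' | h'
        · subst h'; exact mul_self_pos.2 ha
        · exact lt_of_le_of_ne (hcompat x h') (fun h => (mul_ne_zero ha hx2) h.symm)
      rw [hL, f_cons]
      obtain ⟨hne, hlast⟩ := g_last r a ha t a (mul_self_nonneg a) hcompat (Or.inl ha)
      rw [nzf_cons_ne hra]
      have h1 : (1:ℕ) ≤ sv (-(r * a) :: nzf (g r a t)) := by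
        apply sv_ge_one _ (by simp)
        · intro x hx
          rcases List.mem_cons.1 hx with h' | h'
          · subst h'; exact hra
          · exact nzf_mem h'
        · rw [List.head_cons, List.getLast_cons hne]
          nlinarith [mul_pos hr hlast]
      omega
    · -- there is a sign change
      subst htw
      have hbne : b ≠ 0 := by
        intro h; rw [h, mul_zero] at hb; exact lt_irrefl 0 hb
      -- LHS
      have hnzfL : nzf (a :: (u ++ b :: w)) = (a :: nzf u) ++ (b :: nzf w) := by
        rw [show a :: (u ++ b :: w) = (a :: u) ++ (b :: w) from rfl, nzf_append,
          nzf_cons_ne ha, nzf_cons_ne hbne]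
      have hs1 : (a :: nzf u) ≠ [] := by simp
      have hs2 : (b :: nzf w) ≠ [] := by simp
      have hsame : ∀ x ∈ a :: nzf u, 0 < a * x := by
        intro x hx
        rcases List.mem_cons.1 hx with h' | h'
        · subst h'; exact mul_self_pos.2 ha
        · have h1 := nzf_mem h'
          have h2 : x ∈ u := List.Sublist.mem h' (nzf_sublist u)
          exact lt_of_le_of_ne (hu x h2) (fun h => (mul_ne_zero ha h1) h.symm)
      have hgl1 : 0 < a * ((a :: nzf u).getLast hs1) :=
        hsame _ (List.getLast_mem hs1)
      have hind1 : (a :: nzf u).getLast hs1 * ((b :: nzf w).head hs2) < 0 := by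
        rw [List.head_cons]
        exact sgn_trans (by rw [mul_comm]; exact hgl1) hb
      have hLHS : sv (nzf (a :: (u ++ b :: w))) = 1 + sv (b :: nzf w) := by
        rw [hnzfL, sv_append _ _ hs1 hs2, sv_zero_of_samesign a _ hsame, if_pos hind1]
      -- RHS
      obtain ⟨H, pl, hgeq, hplmem⟩ := g_split r b w u a
      have hpl : 0 ≤ a * pl := by
        rcases hplmem with h' | h'
        · rw [h']; exact mul_self_nonneg a
        · exact hu pl h'
      have hcb : 0 < a * (pl - r * b) := by nlinarith
      have hcbne : (pl - r * b) ≠ 0 := by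
        intro h
        rw [h, mul_zero] at hcb; exact lt_irrefl 0 hcb
      have hnzfR : nzf (f r (a :: (u ++ b :: w))) =
          (-(r * a) :: nzf H) ++ ((pl - r * b) :: nzf (g r b w)) := by
        rw [f_cons, hgeq, nzf_cons_ne hra, nzf_append, nzf_cons_ne hcbne, List.cons_append]
      have hF : (-(r * a) :: nzf H) ≠ [] := by simp
      have hM : ((pl - r * b) :: nzf (g r b w)) ≠ [] := by simp
      have hsvR : sv (nzf (f r (a :: (u ++ b :: w)))) =
          sv (-(r * a) :: nzf H) +
          (if (-(r * a) :: nzf H).getLast hF * (pl - r * b) < 0 then 1 else 0) +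
          sv ((pl - r * b) :: nzf (g r b w)) := by
        rw [hnzfR, sv_append _ _ hF hM, List.head_cons]
      have hclaim : 1 ≤ sv (-(r * a) :: nzf H) +
          (if (-(r * a) :: nzf H).getLast hF * (pl - r * b) < 0 then 1 else 0) := by
        have hglmem := List.getLast_mem hF
        have hglne : (-(r * a) :: nzf H).getLast hF ≠ 0 := by
          rcases List.mem_cons.1 hglmem with h' | h'
          · rw [h']; exact hra
          · exact nzf_mem h'
        rcases lt_or_gt_of_ne (mul_ne_zero ha hglne) with hneg | hpos
        · rw [if_pos (by
            rw [mul_comm]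
            exact sgn_trans (by rw [mul_comm]; exact hcb) hneg)]
          exact Nat.le_add_left 1 _
        · have h1 : 1 ≤ sv (-(r * a) :: nzf H) := by
            apply sv_ge_one _ hF
            · intro x hx
              rcases List.mem_cons.1 hx with h' | h'
              · subst h'; exact hra
              · exact nzf_mem h'
            · rw [List.head_cons]
              nlinarith [mul_pos hr hpos]
          exact le_trans h1 (Nat.le_add_right _ _)
      have hrb : -(r * b) ≠ 0 := by
        intro h
        rcases mul_eq_zero.1 (neg_eq_zero.1 h) with h' | h'
        · linarith
        · exact hbne h'
      have hposrb : 0 < a * -(r * b) := by nlinarith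
      have hMsv : sv ((pl - r * b) :: nzf (g r b w)) = sv (nzf (f r (b :: w))) := by
        rw [f_cons, nzf_cons_ne hrb]
        exact sv_head_replace (sgn_pos_trans hcb hposrb) _
      have hw : w.length ≤ n := by
        simp only [List.length_append, List.length_cons] at ht
        omega
      have hIH := ih w hw b r hr hbne
      rw [nzf_cons_ne hbne] at hIH
      rw [hLHS, hsvR, hMsv]
      linarith

lemma getLast_eq_of_eq {l1 l2 : List ℝ} (h : l1 = l2) (h1 : l1 ≠ []) (h2 : l2 ≠ []) :
    l1.getLast h1 = l2.getLast h2 := by subst h; rfl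

lemma indicator_bound {a b ε : ℝ} (ha : a ≠ 0) (hb : b ≠ 0) (k : ℕ)
    (hε : (k = 0 → ε = -1) ∧ (ε = 1 ∨ ε = -1)) :
    (if a * b < 0 then 1 else 0) + (if (1 * a) * (ε * b) < 0 then 1 else 0) ≤ k + 1 := by
  rcases Nat.eq_zero_or_pos k with hk | hk
  · subst hk
    rw [hε.1 rfl]
    have h1 : (1 * a) * ((-1) * b) = -(a * b) := by ring
    rw [h1]
    rcases lt_or_gt_of_ne (mul_ne_zero ha hb) with h | h
    · rw [if_pos h, if_neg (by linarith)]
    · rw [if_neg (by linarith), if_pos (by linarith)]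
  · have h1 : (if a * b < 0 then 1 else 0) ≤ 1 := by split <;> omega
    have h2 : (if (1 * a) * (ε * b) < 0 then 1 else 0) ≤ 1 := by split <;> omega
    omega

/-- upper bound: variations of l and of alternating l sum to less than length -/
lemma upper_bound : ∀ (n : ℕ) (l : List ℝ) (h : l ≠ []), l.length ≤ n →
    l.head h ≠ 0 → l.getLast h ≠ 0 →
    sv (nzf l) + sv (nzf (alt 1 l)) + 1 ≤ l.length := by
  intro n
  induction n with
  | zero =>
    intro l h hl _ _
    exact absurd (List.length_eq_zero_iff.1 (Nat.le_zero.1 hl)) h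
  | succ n ih =>
    intro l h hl hhead hlast
    cases l with
    | nil => exact absurd rfl h
    | cons a t =>
      have ha : a ≠ 0 := by simpa using hhead
      cases ht : t with
      | nil =>
        subst ht
        have h1a : (1:ℝ) * a ≠ 0 := by simpa using ha
        simp [alt_cons, nzf_cons_ne ha, nzf_cons_ne h1a]
      | cons x xs =>
        have htne : t ≠ [] := by rw [ht]; simp
        rw [← ht]
        have hgl : t.getLast htne ≠ 0 := by
          have := List.getLast_cons (l := t) (a := a) htne
          rw [← this]
          convert hlast using 2
        have hex : ∃ z ∈ t, z ≠ 0 := ⟨t.getLast htne, List.getLast_mem htne, hgl⟩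
        obtain ⟨k, b, t', hbne, hteq⟩ := first_nz t hex
        -- nzf l
        have hnz1 : nzf (a :: t) = a :: b :: nzf t' := by
          rw [nzf_cons_ne ha, hteq, nzf_append, nzf_replicate, nzf_cons_ne hbne]
          simp
        -- alt of l
        set ε : ℝ := (-1) * (-1)^k with hepsdef
        have halt : alt 1 (a :: t) = (1*a) :: (List.replicate k 0 ++ (ε * b :: alt (-ε) t')) := by
          rw [alt_cons, hteq, alt_replicate_append, alt_cons]
        have hεb : ε * b ≠ 0 := by
          apply mul_ne_zero _ hbne
          rw [hepsdef]
          rcases Nat.even_or_odd k with he | ho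
          · rw [he.neg_one_pow]; norm_num
          · rw [ho.neg_one_pow]; norm_num
        have h1a : (1:ℝ) * a ≠ 0 := by simpa using ha
        have hnz2 : nzf (alt 1 (a :: t)) = (1*a) :: (ε*b) :: nzf (alt (-ε) t') := by
          rw [halt, nzf_cons_ne h1a, nzf_append, nzf_replicate, nzf_cons_ne hεb]
          simp
        -- apply IH to (b :: t')
        have hbt : (b :: t') ≠ [] := by simp
        have hlen : (b :: t').length ≤ n := by
          have : (a :: t).length ≤ n + 1 := hl
          rw [hteq] at this
          simp [List.length_append] at this ⊢
          omega
        have hlast2 : (b :: t').getLast hbt ≠ 0 := by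
          have e1 : (a :: t).getLast h = (b :: t').getLast hbt := by
            rw [List.getLast_cons htne]
            rw [getLast_eq_of_eq hteq htne (by simp), List.getLast_append_right hbt]
          rw [← e1]; exact hlast
        have hIH := ih (b :: t') hbt hlen (by simpa using hbne) hlast2
        -- unfold IH's nzf and alt
        have hIHnz : nzf (b :: t') = b :: nzf t' := nzf_cons_ne hbne t'
        have hIHalt : nzf (alt 1 (b :: t')) = (1*b) :: nzf (alt (-1) t') := by
          rw [alt_cons, nzf_cons_ne (by simpa using hbne)]
        -- sv computations
        rw [hnz1, hnz2, sv_cons_cons, sv_cons_cons]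
        rw [hIHnz, hIHalt] at hIH
        -- sv (ε*b :: nzf (alt (-ε) t')) = sv (1*b :: nzf (alt (-1) t'))
        have hεcases : ε = 1 ∨ ε = -1 := by
          rw [hepsdef]
          rcases Nat.even_or_odd k with he | ho
          · rw [he.neg_one_pow]; right; norm_num
          · rw [ho.neg_one_pow]; left; norm_num
        have hkey : sv (ε * b :: nzf (alt (-ε) t')) = sv ((1:ℝ) * b :: nzf (alt (-1) t')) := by
          rcases hεcases with he | he
          · rw [he]
          · rw [he]
            have h2 : nzf (alt (-(-1:ℝ)) t') = nzf (alt 1 t') := by norm_num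
            have h3 : sv ((-1) * b :: nzf (alt (-(-1:ℝ)) t')) = sv ((-1)*b :: nzf (alt 1 t')) := by
              rw [h2]
            rw [h3]
            have h4 : sv ((-1) * b :: nzf (alt 1 t')) = sv (List.map (fun x => -x) ((-1) * b :: nzf (alt 1 t'))) := by
              rw [sv_map_neg]
            rw [h4]
            have h5 : List.map (fun x => -x) ((-1) * b :: nzf (alt 1 t')) =
                (1 * b) :: nzf (alt (-1) t') := by
              rw [List.map_cons, alt_neg 1 t', nzf_map_neg]
              congr 1
              ring
            rw [h5]
        rw [hkey]
        -- length bookkeeping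
        have hlength : (a :: t).length = k + t'.length + 2 := by
          simp [hteq]
          omega
        simp only [List.length_cons] at hIH
        have hbound := indicator_bound ha hbne k ⟨fun hk0 => by rw [hepsdef, hk0]; norm_num, hεcases⟩
        omega

lemma alt_g (r : ℝ) : ∀ (t : List ℝ) (σ prev : ℝ),
    alt (-σ) (g r prev t) = List.map (fun x => -x) (g (-r) (σ * prev) (alt (-σ) t)) := by
  intro t
  induction t with
  | nil =>
    intro σ prev
    rw [g_nil, alt_nil, g_nil, alt_cons, alt_nil, List.map_cons, List.map_nil]
    congr 1
    ring
  | cons a s ih =>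
    intro σ prev
    rw [g_cons, alt_cons, alt_cons, g_cons, List.map_cons]
    congr 1
    · ring
    · rw [neg_neg]
      have hih := ih (-σ) a
      rw [neg_neg] at hih
      exact hih

lemma alt_f (r σ : ℝ) (p : List ℝ) :
    alt σ (f r p) = List.map (fun x => -x) (f (-r) (alt σ p)) := by
  cases p with
  | nil => rfl
  | cons a t =>
    rw [f_cons, alt_cons, alt_cons, f_cons, List.map_cons, alt_g r t σ a]
    congr 1
    ring

lemma sv_nzf_alt_f (r σ : ℝ) (p : List ℝ) :
    sv (nzf (alt σ (f r p))) = sv (nzf (f (-r) (alt σ p))) := by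
  rw [alt_f, nzf_map_neg, sv_map_neg]

/- ### Polynomial bridge -/

/-- the coefficient list of a polynomial -/
noncomputable def coeffList (P : ℝ[X]) : List ℝ :=
  (List.range (P.natDegree + 1)).map P.coeff

lemma coeffList_length (P : ℝ[X]) : (coeffList P).length = P.natDegree + 1 := by
  simp [coeffList]

lemma coeffList_ne_nil (P : ℝ[X]) : coeffList P ≠ [] := by
  intro h
  have := coeffList_length P
  rw [h] at this
  simp at this

lemma coeffList_getD (P : ℝ[X]) (k : ℕ) : (coeffList P).getD k 0 = P.coeff k := by
  by_cases h : k < P.natDegree + 1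
  · rw [List.getD_eq_getElem _ _ (by simpa [coeffList_length] using h)]
    simp [coeffList]
  · rw [List.getD_eq_default _ _ (by simpa [coeffList_length] using h)]
    exact (P.coeff_eq_zero_of_natDegree_lt (by omega)).symm

lemma g_length (r : ℝ) : ∀ (t : List ℝ) (prev : ℝ), (g r prev t).length = t.length + 1 := by
  intro t
  induction t with
  | nil => intro prev; rfl
  | cons a s ih => intro prev; rw [g_cons, List.length_cons, ih a]; rfl

lemma f_length (r : ℝ) (p : List ℝ) : (f r p).length = p.length + (if p = [] then 0 else 1) := by
  cases p with
  | nil => rfl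
  | cons a t => simp [f_cons, g_length]

lemma g_getD (r : ℝ) : ∀ (t : List ℝ) (prev : ℝ) (k : ℕ),
    (g r prev t).getD k 0 = (prev :: t).getD k 0 - r * t.getD k 0 := by
  intro t
  induction t with
  | nil =>
    intro prev k
    rw [g_nil]
    cases k with
    | zero => simp
    | succ m => simp
  | cons a s ih =>
    intro prev k
    rw [g_cons]
    cases k with
    | zero => simp
    | succ m =>
      simp only [List.getD_cons_succ]
      exact ih a m

lemma f_getD_zero (r : ℝ) (p : List ℝ) : (f r p).getD 0 0 = -(r * p.getD 0 0) := by
  cases p with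
  | nil => simp [f_nil]
  | cons a t => simp [f_cons]

lemma f_getD_succ (r : ℝ) (p : List ℝ) (k : ℕ) :
    (f r p).getD (k+1) 0 = p.getD k 0 - r * p.getD (k+1) 0 := by
  cases p with
  | nil => simp [f_nil]
  | cons a t =>
    rw [f_cons, List.getD_cons_succ, g_getD, List.getD_cons_succ]

lemma getD_ext {l1 l2 : List ℝ} (hlen : l1.length = l2.length)
    (h : ∀ k, l1.getD k 0 = l2.getD k 0) : l1 = l2 := by
  apply List.ext_getElem hlen
  intro i h1 h2
  have := h i
  rwa [List.getD_eq_getElem _ _ h1, List.getD_eq_getElem _ _ h2] at this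

lemma coeff_X_sub_C_mul (r : ℝ) (P : ℝ[X]) (k : ℕ) :
    ((X - C r) * P).coeff (k+1) = P.coeff k - r * P.coeff (k+1) := by
  rw [sub_mul, Polynomial.coeff_sub, Polynomial.coeff_X_mul, Polynomial.coeff_C_mul]

lemma coeff_X_sub_C_mul_zero (r : ℝ) (P : ℝ[X]) :
    ((X - C r) * P).coeff 0 = -(r * P.coeff 0) := by
  rw [sub_mul, Polynomial.coeff_sub, Polynomial.coeff_C_mul, Polynomial.mul_coeff_zero,
    Polynomial.coeff_X_zero]
  ring

lemma natDegree_X_sub_C_mul (r : ℝ) (P : ℝ[X]) (hP : P ≠ 0) :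
    ((X - C r) * P).natDegree = P.natDegree + 1 := by
  rw [Polynomial.natDegree_mul (Polynomial.X_sub_C_ne_zero r) hP, Polynomial.natDegree_X_sub_C]
  omega

lemma coeffList_mul_X_sub_C (r : ℝ) (P : ℝ[X]) (hP : P ≠ 0) :
    coeffList ((X - C r) * P) = f r (coeffList P) := by
  apply getD_ext
  · rw [coeffList_length, f_length, coeffList_length,
      if_neg (coeffList_ne_nil P), natDegree_X_sub_C_mul r P hP]
  · intro k
    cases k with
    | zero => rw [coeffList_getD, f_getD_zero, coeffList_getD, coeff_X_sub_C_mul_zero]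
    | succ m =>
      rw [coeffList_getD, f_getD_succ, coeffList_getD, coeffList_getD, coeff_X_sub_C_mul]

/-- sign variation of a polynomial -/
noncomputable def svar (P : ℝ[X]) : ℕ := sv (nzf (coeffList P))
/-- sign variation of P(-X) -/
noncomputable def svar' (P : ℝ[X]) : ℕ := sv (nzf (alt 1 (coeffList P)))

lemma svar_mul_X_sub_C {r : ℝ} (hr : 0 < r) (P : ℝ[X]) (h0 : P.coeff 0 ≠ 0) :
    svar P + 1 ≤ svar ((X - C r) * P) := by
  have hP : P ≠ 0 := fun h => h0 (by simp [h])
  rw [svar, svar, coeffList_mul_X_sub_C r P hP]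
  obtain ⟨a, t, hat⟩ : ∃ a t, coeffList P = a :: t := by
    cases h : coeffList P with
    | nil => exact absurd h (coeffList_ne_nil P)
    | cons a t => exact ⟨a, t, rfl⟩
  have ha : a ≠ 0 := by
    have := coeffList_getD P 0
    rw [hat] at this
    simp at this
    rw [this]; exact h0
  rw [hat]
  exact key_A t.length t le_rfl a r hr ha

lemma svar'_mul_X_sub_C {r : ℝ} (hr : r < 0) (P : ℝ[X]) (h0 : P.coeff 0 ≠ 0) :
    svar' P + 1 ≤ svar' ((X - C r) * P) := by
  have hP : P ≠ 0 := fun h => h0 (by simp [h])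
  rw [svar', svar', coeffList_mul_X_sub_C r P hP, sv_nzf_alt_f]
  obtain ⟨a, t, hat⟩ : ∃ a t, alt 1 (coeffList P) = a :: t := by
    cases h : coeffList P with
    | nil => exact absurd h (coeffList_ne_nil P)
    | cons a t => exact ⟨1 * a, alt (-1) t, by rw [alt_cons]⟩
  have ha : a ≠ 0 := by
    cases h : coeffList P with
    | nil => exact absurd h (coeffList_ne_nil P)
    | cons x xs =>
      rw [h, alt_cons] at hat
      have hx : x ≠ 0 := by
        have := coeffList_getD P 0
        rw [h] at this
        simp at this
        rw [this]; exact h0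
      have : a = 1 * x := (List.cons.injEq _ _ _ _ ▸ hat).1.symm
      rw [this]
      simpa using hx
  rw [hat]
  exact key_A t.length t le_rfl a (-r) (by linarith) ha

/- ### Counting sign-change pairs -/

open scoped Classical

/-- the finset of sign-change pairs of a list -/
noncomputable def chg (l : List ℝ) : Finset (ℕ × ℕ) :=
  (Finset.range l.length ×ˢ Finset.range l.length).filter (fun p =>
    p.1 < p.2 ∧ l.getD p.1 0 * l.getD p.2 0 < 0 ∧
      ∀ k, p.1 < k → k < p.2 → l.getD k 0 = 0)

lemma mem_chg {l : List ℝ} {p : ℕ × ℕ} : p ∈ chg l ↔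
    p.1 < p.2 ∧ p.2 < l.length ∧ l.getD p.1 0 * l.getD p.2 0 < 0 ∧
      ∀ k, p.1 < k → k < p.2 → l.getD k 0 = 0 := by
  rw [chg, Finset.mem_filter, Finset.mem_product, Finset.mem_range, Finset.mem_range]
  constructor
  · rintro ⟨⟨h1, h2⟩, h3, h4, h5⟩
    exact ⟨h3, h2, h4, h5⟩
  · rintro ⟨h3, h2, h4, h5⟩
    exact ⟨⟨lt_trans h3 h2, h2⟩, h3, h4, h5⟩

lemma getD_all_zero {t : List ℝ} (h : ∀ z ∈ t, z = 0) (k : ℕ) : t.getD k 0 = 0 := by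
  by_cases hk : k < t.length
  · rw [List.getD_eq_getElem _ _ hk]
    exact h _ (List.getElem_mem hk)
  · exact List.getD_eq_default _ _ (by omega)

lemma nzf_eq_nil {t : List ℝ} (h : ∀ z ∈ t, z = 0) : nzf t = [] := by
  rw [show t = List.replicate t.length 0 from List.eq_replicate_of_mem h, nzf_replicate]

lemma getD_rep_append (k i : ℕ) (m : List ℝ) :
    (List.replicate k (0:ℝ) ++ m).getD i 0 = if i < k then 0 else m.getD (i - k) 0 := by
  split
  · rw [List.getD_append _ _ _ _ (by simpa using ‹i < k›)]
    exact getD_all_zero (by simp) i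
  · rw [List.getD_append_right _ _ _ _ (by simp; omega)]
    simp

/-- the key counting lemma -/
lemma chg_card : ∀ (l : List ℝ), (chg l).card = sv (nzf l) := by
  intro l
  induction l with
  | nil =>
    rw [show nzf [] = [] from rfl, sv_nil, Finset.card_eq_zero]
    ext p
    simp [mem_chg]
  | cons a t ih =>
    have hshift : Finset.filter (fun p => ¬ (p.1 = 0)) (chg (a :: t)) =
        (chg t).map ⟨fun p => (p.1 + 1, p.2 + 1), by
          intro p q hpq
          simp only [Prod.mk.injEq] at hpq
          exact Prod.ext (by omega) (by omega)⟩ := by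
      ext ⟨i, j⟩
      rw [Finset.mem_filter, Finset.mem_map]
      simp only [Function.Embedding.coeFn_mk, Prod.mk.injEq]
      constructor
      · rintro ⟨hm, hi0⟩
        rw [mem_chg] at hm
        obtain ⟨h1, h2, h3, h4⟩ := hm
        obtain ⟨i', rfl⟩ : ∃ i', i = i' + 1 := ⟨i - 1, by omega⟩
        obtain ⟨j', rfl⟩ : ∃ j', j = j' + 1 := ⟨j - 1, by omega⟩
        refine ⟨(i', j'), ?_, rfl⟩
        rw [mem_chg]
        refine ⟨by omega, by simpa using h2, by simpa using h3, ?_⟩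
        intro k hk1 hk2
        have := h4 (k+1) (by omega) (by omega)
        simpa using this
      · rintro ⟨⟨i', j'⟩, hm, hij⟩
        obtain ⟨hi, hj⟩ := Prod.mk.inj (show (i'+1, j'+1) = (i, j) from hij)
        subst hi; subst hj
        rw [mem_chg] at hm
        obtain ⟨h1, h2, h3, h4⟩ := hm
        refine ⟨?_, by omega⟩
        rw [mem_chg]
        refine ⟨by omega, by simpa using h2, by simpa using h3, ?_⟩
        intro k hk1 hk2
        obtain ⟨k', rfl⟩ : ∃ k', k = k' + 1 := ⟨k - 1, by omega⟩
        simpa using h4 k' (by omega) (by omega)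
    have hcard : (chg (a :: t)).card =
        (Finset.filter (fun p => p.1 = 0) (chg (a :: t))).card + (chg t).card := by
      rw [← Finset.card_filter_add_card_filter_not (p := fun p : ℕ × ℕ => p.1 = 0),
        hshift, Finset.card_map]
    by_cases ha : a = 0
    · subst ha
      have hzero : Finset.filter (fun p : ℕ × ℕ => p.1 = 0) (chg ((0:ℝ) :: t)) = ∅ := by
        ext ⟨i, j⟩
        rw [Finset.mem_filter, mem_chg]
        simp only [Finset.notMem_empty, iff_false, not_and]
        rintro ⟨h1, h2, h3, h4⟩ h5
        subst h5
        rw [List.getD_cons_zero] at h3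
        simp at h3
      rw [hcard, hzero, nzf_cons_zero, ← ih]
      simp
    · by_cases hex : ∃ z ∈ t, z ≠ 0
      · obtain ⟨k, b, t', hbne, hteq⟩ := first_nz t hex
        have hnzt : nzf t = b :: nzf t' := by
          rw [hteq, nzf_append, nzf_replicate, nzf_cons_ne hbne]
          simp
        have hnz1 : nzf (a :: t) = a :: b :: nzf t' := by rw [nzf_cons_ne ha, hnzt]
        have hD0 : (a :: t).getD 0 0 = a := List.getD_cons_zero
        have hDmid : ∀ m, 1 ≤ m → m ≤ k → (a :: t).getD m 0 = 0 := by
          intro m h1 h2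
          obtain ⟨m', rfl⟩ : ∃ m', m = m' + 1 := ⟨m - 1, by omega⟩
          rw [List.getD_cons_succ, hteq, getD_rep_append, if_pos (by omega)]
        have hDk1 : (a :: t).getD (k+1) 0 = b := by
          rw [List.getD_cons_succ, hteq, getD_rep_append, if_neg (by omega)]
          simp
        have hlen : k + 1 < (a :: t).length := by
          rw [hteq]
          simp [List.length_append]
        have hfilter : Finset.filter (fun p : ℕ × ℕ => p.1 = 0) (chg (a :: t)) =
            if a * b < 0 then {((0:ℕ), k+1)} else ∅ := by
          ext ⟨i, j⟩
          rw [Finset.mem_filter, mem_chg]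
          constructor
          · rintro ⟨⟨h1, h2, h3, h4⟩, h5⟩
            subst h5
            have hj : j = k + 1 := by
              by_contra hne
              rcases lt_or_gt_of_ne hne with hlt | hgt
              · rw [hDmid j (by omega) (by omega)] at h3
                simp at h3
              · have := h4 (k+1) (by omega) (by omega)
                rw [hDk1] at this
                exact hbne this
            subst hj
            rw [hD0, hDk1] at h3
            rw [if_pos h3]
            simp
          · intro hmem
            by_cases hab : a * b < 0
            · rw [if_pos hab] at hmem
              simp only [Finset.mem_singleton, Prod.mk.injEq] at hmem
              obtain ⟨rfl, rfl⟩ := hmem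
              exact ⟨⟨by omega, hlen, by rw [hD0, hDk1]; exact hab,
                fun m hm1 hm2 => hDmid m (by omega) (by omega)⟩, rfl⟩
            · rw [if_neg hab] at hmem
              simp at hmem
        rw [hcard, hnz1, sv_cons_cons, hfilter, ih, hnzt]
        by_cases hab : a * b < 0
        · rw [if_pos hab, if_pos hab, Finset.card_singleton]
        · rw [if_neg hab, if_neg hab, Finset.card_empty]
      · push_neg at hex
        have hzero : Finset.filter (fun p : ℕ × ℕ => p.1 = 0) (chg (a :: t)) = ∅ := by
          ext ⟨i, j⟩
          rw [Finset.mem_filter, mem_chg]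
          simp only [Finset.notMem_empty, iff_false, not_and]
          rintro ⟨h1, h2, h3, h4⟩ h5
          subst h5
          obtain ⟨j', rfl⟩ : ∃ j', j = j' + 1 := ⟨j - 1, by omega⟩
          rw [List.getD_cons_succ, getD_all_zero hex] at h3
          simp at h3
        rw [hcard, hzero, ih, nzf_eq_nil hex, nzf_cons_ne ha, nzf_eq_nil hex]
        simp

/- ### Multiset iteration -/

lemma coeff0_prod (m : Multiset ℝ) (hm : ∀ r ∈ m, r ≠ 0) (P : ℝ[X]) (h0 : P.coeff 0 ≠ 0) :
    ((m.map (fun r => X - C r)).prod * P).coeff 0 ≠ 0 := by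
  rw [Polynomial.coeff_zero_eq_eval_zero, Polynomial.eval_mul, Polynomial.eval_multiset_prod,
    Multiset.map_map]
  apply mul_ne_zero
  · apply Multiset.prod_ne_zero
    intro hc
    rw [Multiset.mem_map] at hc
    obtain ⟨r, hr, hre⟩ := hc
    simp at hre
    exact hm r hr hre
  · rwa [← Polynomial.coeff_zero_eq_eval_zero]

lemma svar_iter : ∀ (m : Multiset ℝ), (∀ r ∈ m, 0 < r) → ∀ P : ℝ[X], P.coeff 0 ≠ 0 →
    svar P + Multiset.card m ≤ svar ((m.map (fun r => X - C r)).prod * P) := by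
  intro m
  induction m using Multiset.induction_on with
  | empty => intro _ P _; simp
  | cons r m ih =>
    intro hpos P h0
    have hP' := coeff0_prod m (fun x hx => ne_of_gt (hpos x (by simp [hx]))) P h0
    have h1 := svar_mul_X_sub_C (hpos r (by simp)) _ hP'
    have h2 := ih (fun x hx => hpos x (by simp [hx])) P h0
    rw [Multiset.map_cons, Multiset.prod_cons, mul_assoc, Multiset.card_cons]
    omega

lemma svar'_iter : ∀ (m : Multiset ℝ), (∀ r ∈ m, r < 0) → ∀ P : ℝ[X], P.coeff 0 ≠ 0 →
    svar' P + Multiset.card m ≤ svar' ((m.map (fun r => X - C r)).prod * P) := by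
  intro m
  induction m using Multiset.induction_on with
  | empty => intro _ P _; simp
  | cons r m ih =>
    intro hneg P h0
    have hP' := coeff0_prod m (fun x hx => ne_of_lt (hneg x (by simp [hx]))) P h0
    have h1 := svar'_mul_X_sub_C (hneg r (by simp)) _ hP'
    have h2 := ih (fun x hx => hneg x (by simp [hx])) P h0
    rw [Multiset.map_cons, Multiset.prod_cons, mul_assoc, Multiset.card_cons]
    omega

/- ### Polynomial upper bound -/

lemma head_eq_getD (l : List ℝ) (h : l ≠ []) : l.head h = l.getD 0 0 := by
  cases l with
  | nil => exact absurd rfl h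
  | cons a t => rfl

lemma poly_upper (Q : ℝ[X]) (h0 : Q.coeff 0 ≠ 0) : svar Q + svar' Q ≤ Q.natDegree := by
  have hQ : Q ≠ 0 := fun h => h0 (by simp [h])
  have hhead : (coeffList Q).head (coeffList_ne_nil Q) ≠ 0 := by
    rw [head_eq_getD _ (coeffList_ne_nil Q), coeffList_getD]
    exact h0
  have hlast : (coeffList Q).getLast (coeffList_ne_nil Q) ≠ 0 := by
    rw [List.getLast_eq_getElem]
    have h1 := coeffList_getD Q ((coeffList Q).length - 1)
    rw [List.getD_eq_getElem _ _ (by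
      have := coeffList_length Q
      omega)] at h1
    rw [h1, coeffList_length]
    simp only [Nat.add_sub_cancel]
    exact Polynomial.leadingCoeff_ne_zero.2 hQ
  have := upper_bound (coeffList Q).length (coeffList Q) (coeffList_ne_nil Q) le_rfl
    hhead hlast
  rw [coeffList_length] at this
  rw [svar, svar']
  omega

/- ### Nat.card conversion -/

lemma natcard_eq (Q : ℝ[X]) :
    Nat.card {p : ℕ × ℕ // p.1 < p.2 ∧ p.2 ≤ Q.natDegree ∧
        Q.coeff p.1 * Q.coeff p.2 < 0 ∧ ∀ k, p.1 < k → k < p.2 → Q.coeff k = 0} =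
      svar Q := by
  have hset : {p : ℕ × ℕ | p.1 < p.2 ∧ p.2 ≤ Q.natDegree ∧
      Q.coeff p.1 * Q.coeff p.2 < 0 ∧ ∀ k, p.1 < k → k < p.2 → Q.coeff k = 0} =
      ↑(chg (coeffList Q)) := by
    ext p
    simp only [Set.mem_setOf_eq, Finset.coe_sort_coe, Finset.mem_coe, mem_chg,
      coeffList_getD, coeffList_length]
    constructor
    · rintro ⟨h1, h2, h3, h4⟩
      exact ⟨h1, by omega, h3, h4⟩
    · rintro ⟨h1, h2, h3, h4⟩
      exact ⟨h1, by omega, h3, h4⟩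
  rw [show svar Q = (chg (coeffList Q)).card from (chg_card (coeffList Q)).symm]
  calc Nat.card {p : ℕ × ℕ // p.1 < p.2 ∧ p.2 ≤ Q.natDegree ∧
        Q.coeff p.1 * Q.coeff p.2 < 0 ∧ ∀ k, p.1 < k → k < p.2 → Q.coeff k = 0}
      = Nat.card ↥(↑(chg (coeffList Q)) : Set (ℕ × ℕ)) := Nat.card_congr (Equiv.setCongr hset)
    _ = (chg (coeffList Q)).card := by
        rw [Nat.card_coe_set_eq, Set.ncard_coe_finset]

end DescAux


/-- For a hyperbolic polynomial `Q` of degree `d ≥ 1` with `Q(0) ≠ 0`, the number of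
positive roots of `Q` counted with multiplicity equals the number of sign changes in the
sequence of its coefficients after erasing the zero coefficients. -/
theorem pos_roots_eq_sign_changes (Q : ℝ[X]) (hd : 1 ≤ Q.natDegree)
    (hhyp : Q.roots.card = Q.natDegree) (h0 : Q.eval 0 ≠ 0) :
    (Q.roots.filter (fun x => 0 < x)).card =
      Nat.card {p : ℕ × ℕ // p.1 < p.2 ∧ p.2 ≤ Q.natDegree ∧
        Q.coeff p.1 * Q.coeff p.2 < 0 ∧ ∀ k, p.1 < k → k < p.2 → Q.coeff k = 0} := by
  have hQ : Q ≠ 0 := fun h => h0 (by simp [h])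
  have hc0 : Q.coeff 0 ≠ 0 := by rwa [Polynomial.coeff_zero_eq_eval_zero]
  rw [DescAux.natcard_eq]
  have hfact := Polynomial.C_leadingCoeff_mul_prod_multiset_X_sub_C hhyp
  have hne0 : ∀ x ∈ Q.roots, x ≠ 0 := by
    intro x hx hx0
    subst hx0
    exact h0 ((Polynomial.mem_roots'.1 hx).2)
  set pos := Q.roots.filter (fun x => 0 < x) with hposdef
  set neg := Q.roots.filter (fun x => ¬ 0 < x) with hnegdef
  have hsplit : pos + neg = Q.roots := Multiset.filter_add_not _ _
  have hcards : Multiset.card pos + Multiset.card neg = Q.natDegree := by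
    rw [← hhyp, ← hsplit]
    simp
  have hposall : ∀ r ∈ pos, 0 < r := fun r hr => (Multiset.mem_filter.1 hr).2
  have hnegall : ∀ r ∈ neg, r < 0 := by
    intro r hr
    have h1 := (Multiset.mem_filter.1 hr).2
    have h2 := hne0 r (Multiset.mem_filter.1 hr).1
    exact lt_of_le_of_ne (not_lt.1 h1) h2
  have hc : Q.leadingCoeff ≠ 0 := Polynomial.leadingCoeff_ne_zero.2 hQ
  have hCc : (C Q.leadingCoeff).coeff 0 ≠ 0 := by simpa using hc
  have hprodsplit : (Q.roots.map (fun r => X - C r)).prod =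
      (pos.map (fun r => X - C r)).prod * (neg.map (fun r => X - C r)).prod := by
    rw [← hsplit, Multiset.map_add, Multiset.prod_add]
  have hQeqA : Q = ((pos.map (fun r => X - C r)).prod) *
      ((neg.map (fun r => X - C r)).prod * C Q.leadingCoeff) := by
    conv_lhs => rw [← hfact]
    rw [hprodsplit]
    ring
  have hA := DescAux.svar_iter pos hposall _
    (DescAux.coeff0_prod neg (fun x hx => ne_of_lt (hnegall x hx)) _ hCc)
  rw [← hQeqA] at hA
  have hQeqB : Q = ((neg.map (fun r => X - C r)).prod) *
      ((pos.map (fun r => X - C r)).prod * C Q.leadingCoeff) := by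
    conv_lhs => rw [← hfact]
    rw [hprodsplit]
    ring
  have hB := DescAux.svar'_iter neg hnegall _
    (DescAux.coeff0_prod pos (fun x hx => ne_of_gt (hposall x hx)) _ hCc)
  rw [← hQeqB] at hB
  have hU := DescAux.poly_upper Q hc0
  omega
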